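/- If H is an r-stable induced subgraph of G and the number of edges between H and the rest of G is at most r, then all edges between H and G \ H are redundant in G. -/

import Mathlib

open SimpleGraph

/-- The independence number of a graph. -/
noncomputable def indepNum {V : Type} (G : SimpleGraph V) : ℕ :=
  sSup {n : ℕ | ∃ s : Set V, s.Finite ∧ s.ncard = n ∧ ∀ a ∈ s, ∀ b ∈ s, ¬ G.Adj a b}

/-- The number of edges of a graph. -/
noncomputable def numEdges {V : Type} (G : SimpleGraph V) : ℕ := G.edgeSet.ncard

/-- The degree (valency) of a vertex. -/
noncomputable def deg {V : Type} (G : SimpleGraph V) (v : V) : ℕ := (G.neighborSet v).ncard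

/-- The second valency `d²(v) = ∑_{w ∈ N(v)} d(w)`. -/
noncomputable def secondDeg {V : Type} (G : SimpleGraph V) (v : V) : ℕ :=
  ∑ᶠ w ∈ G.neighborSet v, deg G w

/-- `p = (a,b,c,d)` is an (ordered) 4-cycle of `G`. -/
def IsC4 {V : Type} (G : SimpleGraph V) (p : V × V × V × V) : Prop :=
  G.Adj p.1 p.2.1 ∧ G.Adj p.2.1 p.2.2.1 ∧ G.Adj p.2.2.1 p.2.2.2 ∧
    G.Adj p.2.2.2 p.1 ∧ p.1 ≠ p.2.2.1 ∧ p.2.1 ≠ p.2.2.2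

/-- The number of 4-cycles of `G`; each 4-cycle yields 8 ordered tuples. -/
noncomputable def numC4 {V : Type} (G : SimpleGraph V) : ℕ :=
  {p : V × V × V × V | IsC4 G p}.ncard / 8

/-- The number of 4-cycles of `G` containing a vertex of `S`. -/
noncomputable def numC4Through {V : Type} (G : SimpleGraph V) (S : Set V) : ℕ :=
  {p : V × V × V × V | IsC4 G p ∧ (p.1 ∈ S ∨ p.2.1 ∈ S ∨ p.2.2.1 ∈ S ∨ p.2.2.2 ∈ S)}.ncard / 8

/-- The invariant `ν(G) = 3e(G) − 17n(G) + 35α(G) + N(C₄;G)`. -/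
noncomputable def nu {V : Type} (G : SimpleGraph V) : ℤ :=
  3 * (numEdges G : ℤ) - 17 * (Nat.card V : ℤ) + 35 * (_root_.indepNum G : ℤ) + (numC4 G : ℤ)

/-- The closed neighbourhood `N[v]`. -/
def closedNbhd {V : Type} (G : SimpleGraph V) (v : V) : Set V := insert v (G.neighborSet v)

/-- `S` destabilises `G` : removing `S` decreases the independence number. -/
def Destab {V : Type} (G : SimpleGraph V) (S : Set V) : Prop :=
  _root_.indepNum (G.induce Sᶜ) < _root_.indepNum G

/-- `G` is edge-critical (α-critical): removing any edge increases the independence number. -/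
def EdgeCritical {V : Type} (G : SimpleGraph V) : Prop :=
  ∀ e ∈ G.edgeSet, _root_.indepNum G < _root_.indepNum (G.deleteEdges {e})

lemma indep_bdd {V : Type} [Finite V] (G : SimpleGraph V) :
    BddAbove {n : ℕ | ∃ s : Set V, s.Finite ∧ s.ncard = n ∧ ∀ a ∈ s, ∀ b ∈ s, ¬ G.Adj a b} := by
  refine ⟨Nat.card V, ?_⟩
  rintro n ⟨s, hf, rfl, -⟩
  simpa [Set.ncard_univ] using Set.ncard_le_ncard (Set.subset_univ s) Set.finite_univ

lemma indep_nonempty {V : Type} (G : SimpleGraph V) :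
    {n : ℕ | ∃ s : Set V, s.Finite ∧ s.ncard = n ∧ ∀ a ∈ s, ∀ b ∈ s, ¬ G.Adj a b}.Nonempty :=
  ⟨0, ∅, Set.finite_empty, by simp, by simp⟩

lemma le_indepNum {V : Type} [Finite V] (G : SimpleGraph V) (s : Set V)
    (h : ∀ a ∈ s, ∀ b ∈ s, ¬ G.Adj a b) : s.ncard ≤ _root_.indepNum G :=
  le_csSup (indep_bdd G) ⟨s, s.toFinite, rfl, h⟩

lemma exists_indep {V : Type} [Finite V] (G : SimpleGraph V) :
    ∃ s : Set V, s.ncard = _root_.indepNum G ∧ ∀ a ∈ s, ∀ b ∈ s, ¬ G.Adj a b := by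
  obtain ⟨s, -, hcard, hind⟩ := Nat.sSup_mem (indep_nonempty G) (indep_bdd G)
  exact ⟨s, hcard, hind⟩

/-- If `H = G[A]` is `r`-stable and at most `r` edges of `G` join `A` to its complement,
then all such edges are redundant in `G`. -/
theorem stmt7 {V : Type} [Fintype V] (G : SimpleGraph V) (A : Set V) (r : ℕ)
    (hstable : ∀ T : Set ↥A, T.ncard ≤ r → ¬ Destab (G.induce A) T)
    (hcount : {e : Sym2 V | e ∈ G.edgeSet ∧ ∃ a ∈ A, ∃ b ∈ Aᶜ, e = s(a, b)}.ncard ≤ r)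
    (x y : V) (hx : x ∈ A) (hy : y ∉ A) (hadj : G.Adj x y) :
    _root_.indepNum (G.deleteEdges {s(x, y)}) = _root_.indepNum G := by
  classical
  refine le_antisymm ?_ ?_
  · -- hard direction
    obtain ⟨I, hIcard, hIind⟩ := exists_indep (G.deleteEdges {s(x, y)})
    rw [← hIcard]
    -- any G-edge inside I must be s(x,y)
    have hIe : ∀ a ∈ I, ∀ b ∈ I, G.Adj a b → s(a, b) = s(x, y) := by
      intro a ha b hb hab
      by_contra hne
      exact hIind a ha b hb (SimpleGraph.deleteEdges_adj.2 ⟨hab, by simpa using hne⟩)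
    by_cases hxy : x ∈ I ∧ y ∈ I
    · obtain ⟨hxI, hyI⟩ := hxy
      -- the destabilising set S ⊆ A
      set P : ↥A → V → Prop := fun a b => b ∈ I ∧ b ∉ A ∧ G.Adj ↑a b with hP
      set S : Set ↥A := {a | ∃ b, P a b} with hSdef
      -- |S| ≤ r
      have hS : S.ncard ≤ r := by
        refine le_trans ?_ hcount
        refine Set.ncard_le_ncard_of_injOn
          (fun a => if h : ∃ b, P a b then s((a : V), h.choose) else s(x, y)) ?_ ?_
          (Set.toFinite _)
        · rintro a ha
          have ha' : ∃ b, P a b := ha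
          obtain ⟨hbI, hbA, hadj'⟩ := ha'.choose_spec
          simp only [dif_pos ha', Set.mem_setOf_eq, SimpleGraph.mem_edgeSet]
          exact ⟨hadj', (a : V), a.2, ha'.choose, hbA, rfl⟩
        · intro a ha a' ha' hff
          have hb : ∃ b, P a b := ha
          have hb' : ∃ b, P a' b := ha'
          simp only [dif_pos hb, dif_pos hb'] at hff
          obtain ⟨-, hbA, -⟩ := hb.choose_spec
          obtain ⟨-, hbA', -⟩ := hb'.choose_spec
          rcases Sym2.eq_iff.1 hff with ⟨h1, -⟩ | ⟨h1, h2⟩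
          · exact Subtype.ext h1
          · exact absurd (h1 ▸ a.2) hbA'
      have hns := hstable S hS
      rw [Destab, not_lt] at hns
      -- a maximum independent set J of (G.induce A).induce Sᶜ
      obtain ⟨J, hJcard, hJind⟩ := exists_indep ((G.induce A).induce Sᶜ)
      -- I ∩ A pulled back to A is independent in G.induce A
      have hIA : (Subtype.val ⁻¹' I : Set ↥A).ncard ≤ J.ncard := by
        have h1 : (Subtype.val ⁻¹' I : Set ↥A).ncard ≤ _root_.indepNum (G.induce A) := by
          refine le_indepNum _ _ ?_
          intro a ha b hb hab
          have hadj' : G.Adj ↑a ↑b := hab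
          have := hIe _ ha _ hb hadj'
          rcases Sym2.eq_iff.1 this with ⟨-, h2⟩ | ⟨h2, -⟩
          · exact hy (h2 ▸ b.2)
          · exact hy (h2 ▸ a.2)
        rw [hJcard]
        exact le_trans h1 hns
      -- the combined independent set in G
      set K : Set V := (Subtype.val '' (Subtype.val '' J)) ∪ (I \ A) with hKdef
      have hKind : ∀ a ∈ K, ∀ b ∈ K, ¬ G.Adj a b := by
        have key : ∀ a ∈ (Subtype.val '' (Subtype.val '' J) : Set V), ∀ b ∈ I \ A,
            ¬ G.Adj a b := by
          rintro a ⟨⟨a1, ha1A⟩, ⟨j, hjJ, hj1⟩, rfl⟩ b ⟨hbI, hbA⟩ hab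
          have : (⟨a1, ha1A⟩ : ↥A) ∈ S := ⟨b, hbI, hbA, hab⟩
          have hjc : (j : ↥A) ∈ (Sᶜ : Set ↥A) := j.2
          rw [hj1] at hjc
          exact hjc this
        rintro a (haJ | haI) b (hbJ | hbI)
        · obtain ⟨a1, ⟨ja, hja, hja1⟩, rfl⟩ := haJ
          obtain ⟨b1, ⟨jb, hjb, hjb1⟩, rfl⟩ := hbJ
          intro hab
          refine hJind ja hja jb hjb ?_
          have goal : G.Adj ((ja : ↥A) : V) ((jb : ↥A) : V) := by
            rw [hja1, hjb1]; exact hab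
          exact goal
        · exact key a haJ b hbI
        · intro hab; exact key b hbJ a haI hab.symm
        · intro hab
          have := hIe _ haI.1 _ hbI.1 hab
          rcases Sym2.eq_iff.1 this with ⟨h1, -⟩ | ⟨-, h2⟩
          · exact haI.2 (h1 ▸ hx)
          · exact hbI.2 (h2 ▸ hx)
      have hKle : K.ncard ≤ _root_.indepNum G := le_indepNum G K hKind
      have hKcard : K.ncard = J.ncard + (I \ A).ncard := by
        rw [hKdef, Set.ncard_union_eq, Set.ncard_image_of_injective _ Subtype.val_injective,
          Set.ncard_image_of_injective _ Subtype.val_injective]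
        rw [Set.disjoint_left]
        rintro a ⟨a1, -, rfl⟩ ⟨-, haA⟩
        exact haA a1.2
      have hsplit : (I ∩ A).ncard + (I \ A).ncard = I.ncard :=
        Set.ncard_inter_add_ncard_diff_eq_ncard I A
      have hIAeq : (I ∩ A).ncard = (Subtype.val ⁻¹' I : Set ↥A).ncard := by
        rw [← Set.ncard_image_of_injective _ (Subtype.val_injective (p := (· ∈ A))),
          Set.image_preimage_eq_inter_range, Subtype.range_coe]
      calc I.ncard = (I ∩ A).ncard + (I \ A).ncard := hsplit.symm
        _ ≤ J.ncard + (I \ A).ncard := by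
            rw [hIAeq]; exact Nat.add_le_add_right hIA _
        _ = K.ncard := hKcard.symm
        _ ≤ _root_.indepNum G := hKle
    · -- I is independent in G itself
      refine le_indepNum G I ?_
      intro a ha b hb hab
      have := hIe a ha b hb hab
      rcases Sym2.eq_iff.1 this with ⟨h1, h2⟩ | ⟨h1, h2⟩
      · exact hxy ⟨h1 ▸ ha, h2 ▸ hb⟩
      · exact hxy ⟨h2 ▸ hb, h1 ▸ ha⟩
  · -- easy direction: deleting an edge only helps
    refine csSup_le_csSup (indep_bdd _) (indep_nonempty _) ?_
    rintro n ⟨s, hf, rfl, hind⟩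
    exact ⟨s, hf, rfl, fun a ha b hb hab =>
      hind a ha b hb (SimpleGraph.deleteEdges_adj.1 hab).1⟩
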